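/- Let K be a fixed compact subset of (0,π). Then there exists a constant C such that for all θ ∈ K, φ ∈ (0,π) and u, v ∈ [−1,1]: |∂_θ q(θ,φ,u,v) − (1/2) sin((θ−φ)/2)| ≤ C · q(θ,φ,u,v). -/

import Mathlib

open Real Set

noncomputable section

/-- `q(θ,φ,u,v) = 1 − u sin(θ/2)sin(φ/2) − v cos(θ/2)cos(φ/2)`. -/
def qFun (θ φ u v : ℝ) : ℝ :=
  1 - u * Real.sin (θ/2) * Real.sin (φ/2) - v * Real.cos (θ/2) * Real.cos (φ/2)

lemma qFun_hasDerivAt (φ u v θ : ℝ) :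
    HasDerivAt (fun θ' => qFun θ' φ u v)
      (v/2 * Real.sin (θ/2) * Real.cos (φ/2) - u/2 * Real.cos (θ/2) * Real.sin (φ/2)) θ := by
  have h1 : HasDerivAt (fun θ' : ℝ => θ'/2) (1/2) θ := (hasDerivAt_id θ).div_const 2
  have hs := (Real.hasDerivAt_sin (θ/2)).comp θ h1
  have hc := (Real.hasDerivAt_cos (θ/2)).comp θ h1
  have h := (((hs.const_mul u).mul_const (Real.sin (φ/2))).const_sub 1).sub
    ((hc.const_mul v).mul_const (Real.cos (φ/2)))
  refine h.congr_deriv ?_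
  ring

/-- for `θ` in a compact subset `K` of `(0,π)`,
`∂_θ q = (1/2) sin((θ−φ)/2) + Q` with `|Q| ≲ q`, uniformly in
`φ ∈ (0,π)` and `u, v ∈ [−1,1]`. -/
theorem deriv_q_decomposition
    (K : Set ℝ) (hK : IsCompact K) (hKsub : K ⊆ Set.Ioo 0 π) :
    ∃ C : ℝ, ∀ θ ∈ K, ∀ φ ∈ Set.Ioo 0 π,
      ∀ u ∈ Set.Icc (-1:ℝ) 1, ∀ v ∈ Set.Icc (-1:ℝ) 1,
      |deriv (fun θ' => qFun θ' φ u v) θ - (1/2) * Real.sin ((θ - φ)/2)| ≤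
        C * qFun θ φ u v := by
  rcases K.eq_empty_or_nonempty with hKe | hne
  · exact ⟨0, by simp [hKe]⟩
  have hcont : ContinuousOn (fun θ => min (Real.sin (θ/2)) (Real.cos (θ/2))) K := by
    apply Continuous.continuousOn
    exact (Real.continuous_sin.comp (continuous_id.div_const 2)).min
      (Real.continuous_cos.comp (continuous_id.div_const 2))
  obtain ⟨θ₀, hθ₀K, hmin'⟩ := hK.exists_isMinOn hne hcont
  have hmin : ∀ x ∈ K, min (Real.sin (θ₀/2)) (Real.cos (θ₀/2)) ≤ min (Real.sin (x/2)) (Real.cos (x/2)) := fun x hx => hmin' hx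
  set δ := min (Real.sin (θ₀/2)) (Real.cos (θ₀/2)) with hδdef
  have hθ₀ := hKsub hθ₀K
  have hδpos : 0 < δ := by
    apply lt_min
    · exact Real.sin_pos_of_pos_of_lt_pi (by linarith [hθ₀.1]) (by linarith [hθ₀.2, Real.pi_pos])
    · exact Real.cos_pos_of_mem_Ioo ⟨by linarith [hθ₀.1, Real.pi_pos], by linarith [hθ₀.2]⟩
  refine ⟨1/(2*δ), ?_⟩
  intro θ hθK φ hφ u hu v hv
  have hθ := hKsub hθK
  set sθ := Real.sin (θ/2)
  set cθ := Real.cos (θ/2)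
  set sφ := Real.sin (φ/2)
  set cφ := Real.cos (φ/2)
  have hδs : δ ≤ sθ := le_trans (hmin θ hθK) (min_le_left _ _)
  have hδc : δ ≤ cθ := le_trans (hmin θ hθK) (min_le_right _ _)
  have hsθ1 : sθ ≤ 1 := Real.sin_le_one _
  have hcθ1 : cθ ≤ 1 := Real.cos_le_one _
  have hsφ : 0 ≤ sφ :=
    Real.sin_nonneg_of_nonneg_of_le_pi (by linarith [hφ.1]) (by linarith [hφ.2, Real.pi_pos])
  have hcφ : 0 ≤ cφ :=
    le_of_lt (Real.cos_pos_of_mem_Ioo ⟨by linarith [hφ.1, Real.pi_pos], by linarith [hφ.2]⟩)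
  have hu1 : u ≤ 1 := hu.2
  have hv1 : v ≤ 1 := hv.2
  have hderiv : deriv (fun θ' => qFun θ' φ u v) θ = v/2 * sθ * cφ - u/2 * cθ * sφ :=
    (qFun_hasDerivAt φ u v θ).deriv
  have hsin : Real.sin ((θ - φ)/2) = sθ * cφ - cθ * sφ := by
    have h2 : (θ - φ)/2 = θ/2 - φ/2 := by ring
    rw [h2, Real.sin_sub]
  have hq : (1-u) * (sθ * sφ) + (1-v) * (cθ * cφ) ≤ qFun θ φ u v := by
    have hcos : cθ * cφ + sθ * sφ = Real.cos (θ/2 - φ/2) := (Real.cos_sub _ _).symm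
    have h1 : Real.cos (θ/2 - φ/2) ≤ 1 := Real.cos_le_one _
    simp only [qFun]
    nlinarith
  rw [hderiv, hsin]
  have hsc : δ * cθ ≤ sθ := by nlinarith
  have hcs : δ * sθ ≤ cθ := by nlinarith
  have hgoal : |v/2 * sθ * cφ - u/2 * cθ * sφ - 1/2 * (sθ * cφ - cθ * sφ)| * (2*δ)
      ≤ qFun θ φ u v := by
    rcases abs_cases (v/2 * sθ * cφ - u/2 * cθ * sφ - 1/2 * (sθ * cφ - cθ * sφ)) with
      ⟨h, _⟩ | ⟨h, _⟩ <;> rw [h]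
    · nlinarith [mul_nonneg (mul_nonneg (sub_nonneg.2 hu1) hsφ) (sub_nonneg.2 hsc),
        mul_nonneg (mul_nonneg (mul_nonneg hδpos.le (sub_nonneg.2 hv1)) (by linarith : (0:ℝ) ≤ sθ)) hcφ,
        mul_nonneg (mul_nonneg (sub_nonneg.2 hv1) (by linarith : (0:ℝ) ≤ cθ)) hcφ]
    · nlinarith [mul_nonneg (mul_nonneg (sub_nonneg.2 hv1) hcφ) (sub_nonneg.2 hcs),
        mul_nonneg (mul_nonneg (mul_nonneg hδpos.le (sub_nonneg.2 hu1)) (by linarith : (0:ℝ) ≤ cθ)) hsφ,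
        mul_nonneg (mul_nonneg (sub_nonneg.2 hu1) (by linarith : (0:ℝ) ≤ sθ)) hsφ]
  calc |v/2 * sθ * cφ - u/2 * cθ * sφ - 1/2 * (sθ * cφ - cθ * sφ)|
      = (|v/2 * sθ * cφ - u/2 * cθ * sφ - 1/2 * (sθ * cφ - cθ * sφ)| * (2*δ)) * (1/(2*δ)) := by
        field_simp
    _ ≤ qFun θ φ u v * (1/(2*δ)) := mul_le_mul_of_nonneg_right hgoal (by positivity)
    _ = 1/(2*δ) * qFun θ φ u v := by ring

end
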